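/- arXiv:2404.04400 — 6 statements merged into one kernel-verified Lean document; each statement's English description precedes it below -/
import Mathlib

section
/- Let 1 ≤ p < 2 and let θ ∈ [0,1] satisfy either 0 ≤ θ < (1 − √(p−1))/2 or (1 + √(p−1))/2 < θ ≤ 1. Then there exist real numbers a, b ≥ 0 and c ∈ (0,1) such that a^p + b^p = 1 and, setting δ = ((1−c)/c)^{(2θ−1)/p}, one has (c(1−c))^{p/2} · ((a + b·δ⁻¹)^p + (a·δ + b)^p) > 1. -/
lemma two_cosh_form (x : ℝ) : 1 + Real.exp (2*x) = Real.exp x * (2 * Real.cosh x) := by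
  rw [Real.cosh_eq]
  have h1 : Real.exp x * Real.exp (-x) = 1 := by rw [← Real.exp_add]; simp
  have h2 : Real.exp x * Real.exp x = Real.exp (2*x) := by rw [← Real.exp_add]; ring_nf
  linear_combination -h1 - h2

lemma sq_rpow_helper (y p : ℝ) (hy : 0 ≤ y) : (y^2) ^ (p/2) = y ^ p := by
  rw [← Real.rpow_natCast y 2, ← Real.rpow_mul hy]
  norm_num
  rw [show 2*(p/2) = p by ring]

lemma my_one_add_half_sq_le_cosh (x : ℝ) : 1 + x^2/2 ≤ Real.cosh x := by
  have key : Real.cosh x = 1 + 2 * Real.sinh (x/2)^2 := by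
    have h := Real.cosh_two_mul (x/2)
    rw [show 2*(x/2) = x by ring] at h
    rw [h, Real.cosh_sq]; ring
  have h2 : (x/2)^2 ≤ Real.sinh (x/2)^2 := by
    have habs := Real.abs_sinh (x/2)
    have h3 : |x/2| ≤ Real.sinh |x/2| := Real.self_le_sinh_iff.2 (abs_nonneg _)
    calc (x/2)^2 = |x/2|^2 := (sq_abs _).symm
      _ ≤ Real.sinh |x/2| ^ 2 := by
          apply pow_le_pow_left₀ (abs_nonneg _) h3 _
      _ = |Real.sinh (x/2)|^2 := by rw [habs]
      _ = Real.sinh (x/2)^2 := sq_abs _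
  rw [key]; nlinarith

lemma my_exp_le_one_add (y : ℝ) (hy : 0 ≤ y) : Real.exp (y - y^2) ≤ 1 + y := by
  have h0 : (0:ℝ) < 1 + y := by linarith
  have h1 : y - y^2 ≤ y/(1+y) := by
    rw [le_div_iff₀ h0]; nlinarith [pow_nonneg hy 3]
  have h2 : Real.exp (y/(1+y)) ≤ 1 + y := by
    have h3 := Real.add_one_le_exp (-(y/(1+y)))
    have h5 : -(y/(1+y)) + 1 = 1/(1+y) := by field_simp; ring
    rw [h5] at h3
    have h4 : Real.exp (-(y/(1+y))) * Real.exp (y/(1+y)) = 1 := by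
      rw [← Real.exp_add]; simp
    have h6 : (1/(1+y)) * Real.exp (y/(1+y)) ≤ 1 := by
      calc (1/(1+y)) * Real.exp (y/(1+y))
          ≤ Real.exp (-(y/(1+y))) * Real.exp (y/(1+y)) :=
            mul_le_mul_of_nonneg_right h3 (Real.exp_pos _).le
        _ = 1 := h4
    rw [one_div, inv_mul_eq_div] at h6
    exact (div_le_one h0).mp h6
  exact (Real.exp_le_exp.2 h1).trans h2

lemma my_exp_le_cosh (x : ℝ) : Real.exp (x^2/2 - (x^2/2)^2) ≤ Real.cosh x :=
  le_trans (my_exp_le_one_add (x^2/2) (by positivity)) (my_one_add_half_sq_le_cosh x)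

lemma key_cosh (p s : ℝ) (hp : 1 < p) (hs : p - 1 < s^2) :
    ∃ v : ℝ, 0 < v ∧
      Real.cosh v ^ p < Real.cosh (s*v) * Real.cosh (s/(p-1)*v) ^ (p-1) := by
  have hp1 : (0:ℝ) < p - 1 := by linarith
  have hs2 : (0:ℝ) < s^2 := lt_trans hp1 hs
  have hs0 : s ≠ 0 := fun h => by simp [h] at hs2
  set r : ℝ := s/(p-1) with hr
  set K : ℝ := s^2 + (p-1)*r^2 - p with hK
  set M : ℝ := s^4 + (p-1)*r^4 with hM
  have hMpos : 0 < M := by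
    have h1 : (0:ℝ) < s^4 := by positivity
    have h2 : (0:ℝ) ≤ (p-1)*r^4 := mul_nonneg hp1.le (by positivity)
    rw [hM]; linarith
  have hKpos : 0 < K := by
    have h1 : K = p * (s^2 - (p-1)) / (p-1) := by
      rw [hK, hr]; field_simp; ring
    rw [h1]
    exact div_pos (mul_pos (by linarith) (by linarith)) hp1
  refine ⟨Real.sqrt (K/M), Real.sqrt_pos.2 (div_pos hKpos hMpos), ?_⟩
  set v := Real.sqrt (K/M) with hv
  have hv2 : v^2 = K/M := Real.sq_sqrt (div_pos hKpos hMpos).le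
  have hb1 : Real.cosh v ^ p ≤ Real.exp (v^2/2 * p) := by
    rw [Real.exp_mul]
    exact Real.rpow_le_rpow (Real.cosh_pos v).le (Real.cosh_le_exp_half_sq v) (by linarith)
  have hb2 : Real.exp ((s*v)^2/2 - ((s*v)^2/2)^2) ≤ Real.cosh (s*v) := my_exp_le_cosh _
  have hb3 : Real.exp (((r*v)^2/2 - ((r*v)^2/2)^2) * (p-1)) ≤ Real.cosh (r*v) ^ (p-1) := by
    rw [Real.exp_mul]
    exact Real.rpow_le_rpow (Real.exp_pos _).le (my_exp_le_cosh _) (by linarith)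
  have harith : v^2/2*p <
      ((s*v)^2/2 - ((s*v)^2/2)^2) + (((r*v)^2/2 - ((r*v)^2/2)^2) * (p-1)) := by
    have e1 : ((s*v)^2/2 - ((s*v)^2/2)^2) + (((r*v)^2/2 - ((r*v)^2/2)^2) * (p-1)) - v^2/2*p
        = K * v^2/2 - M * (v^2)^2/4 := by rw [hK, hM]; ring
    have e2 : K * v^2/2 - M*(v^2)^2/4 = K^2/(4*M) := by
      rw [hv2]; field_simp; ring
    have e3 : (0:ℝ) < K^2/(4*M) := by positivity
    linarith
  calc Real.cosh v ^ p ≤ Real.exp (v^2/2*p) := hb1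
    _ < Real.exp (((s*v)^2/2 - ((s*v)^2/2)^2) + (((r*v)^2/2 - ((r*v)^2/2)^2)*(p-1))) :=
        Real.exp_lt_exp.2 harith
    _ = Real.exp ((s*v)^2/2 - ((s*v)^2/2)^2) * Real.exp (((r*v)^2/2 - ((r*v)^2/2)^2)*(p-1)) :=
        Real.exp_add _ _
    _ ≤ Real.cosh (s*v) * Real.cosh (r*v)^(p-1) :=
        mul_le_mul hb2 hb3 (Real.exp_pos _).le (Real.cosh_pos _).le

lemma key_exp (p s : ℝ) (hp : 1 < p) (hs : p - 1 < s^2) :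
    ∃ v : ℝ, 0 < v ∧ (1 + Real.exp (2*v))^p
      < Real.exp (v*p) *
          ((1 + Real.exp (2*(-(v*s)/(p-1))))^(p-1) * (1 + Real.exp (2*(v*s)))) := by
  have hp1 : (0:ℝ) < p - 1 := by linarith
  obtain ⟨v, hv0, hkey⟩ := key_cosh p s hp hs
  refine ⟨v, hv0, ?_⟩
  set xa : ℝ := -(v*s)/(p-1) with hxa
  rw [two_cosh_form v, two_cosh_form xa, two_cosh_form (v*s)]
  rw [Real.mul_rpow (Real.exp_pos v).le (by positivity), ← Real.exp_mul,
      Real.mul_rpow (Real.exp_pos xa).le (by positivity), ← Real.exp_mul]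
  have hxa1 : xa*(p-1) = -(v*s) := by rw [hxa]; field_simp
  rw [hxa1]
  have hmain : (2*Real.cosh v)^p < (2*Real.cosh xa)^(p-1) * (2*Real.cosh (v*s)) := by
    rw [Real.mul_rpow (by norm_num) (Real.cosh_pos v).le,
        Real.mul_rpow (by norm_num) (Real.cosh_pos xa).le]
    have h2p : (2:ℝ)^(p-1) * 2 = (2:ℝ)^p := by
      have : (2:ℝ)^p = 2^(p-1) * 2^(1:ℝ) := by
        rw [← Real.rpow_add two_pos]; norm_num
      rw [this, Real.rpow_one]
    have hre : (2:ℝ)^(p-1) * Real.cosh xa^(p-1) * (2*Real.cosh (v*s))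
        = (2:ℝ)^p * (Real.cosh xa^(p-1) * Real.cosh (v*s)) := by
      rw [← h2p]; ring
    rw [hre]
    have hc1 : Real.cosh xa = Real.cosh (s/(p-1)*v) := by
      rw [hxa, show -(v*s)/(p-1) = -(s/(p-1)*v) by ring, Real.cosh_neg]
    have hc2 : Real.cosh (v*s) = Real.cosh (s*v) := by rw [mul_comm]
    have hlt : Real.cosh v ^ p < Real.cosh xa^(p-1) * Real.cosh (v*s) := by
      rw [hc1, hc2, mul_comm]; exact hkey
    exact mul_lt_mul_of_pos_left hlt (by positivity)
  have hre2 : Real.exp (-(v*s)) * (2*Real.cosh xa)^(p-1) * (Real.exp (v*s) * (2*Real.cosh (v*s)))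
      = (2*Real.cosh xa)^(p-1) * (2*Real.cosh (v*s)) := by
    have hc : Real.exp (-(v*s)) * Real.exp (v*s) = 1 := by rw [← Real.exp_add]; simp
    calc Real.exp (-(v*s)) * (2*Real.cosh xa)^(p-1) * (Real.exp (v*s) * (2*Real.cosh (v*s)))
        = (Real.exp (-(v*s)) * Real.exp (v*s)) * ((2*Real.cosh xa)^(p-1) * (2*Real.cosh (v*s))) := by
          ring
      _ = (2*Real.cosh xa)^(p-1) * (2*Real.cosh (v*s)) := by rw [hc]; ring
  rw [hre2]
  exact mul_lt_mul_of_pos_left hmain (Real.exp_pos _)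

/-- Let `1 ≤ p < 2` and let `θ ∈ [0,1]` satisfy either
`0 ≤ θ < (1 − √(p−1))/2` or `(1 + √(p−1))/2 < θ ≤ 1`.  Then there exist real numbers
`a, b ≥ 0` and `c ∈ (0,1)` such that `a^p + b^p = 1` and, setting
`δ = ((1−c)/c)^((2θ−1)/p)`, one has
`(c(1−c))^(p/2) · ((a + b·δ⁻¹)^p + (a·δ + b)^p) > 1`. -/
theorem stmt_0 (p θ : ℝ) (hp1 : 1 ≤ p) (hp2 : p < 2) (hθ0 : 0 ≤ θ) (hθ1 : θ ≤ 1)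
    (hθ : θ < (1 - Real.sqrt (p - 1)) / 2 ∨ (1 + Real.sqrt (p - 1)) / 2 < θ) :
    ∃ a b c : ℝ, 0 ≤ a ∧ 0 ≤ b ∧ 0 < c ∧ c < 1 ∧ a ^ p + b ^ p = 1 ∧
      1 < (c * (1 - c)) ^ (p / 2) *
        ((a + b * (((1 - c) / c) ^ ((2 * θ - 1) / p))⁻¹) ^ p +
          (a * ((1 - c) / c) ^ ((2 * θ - 1) / p) + b) ^ p) := by
  set s : ℝ := 2*θ - 1 with hsdef
  have hp0 : (0:ℝ) < p := by linarith
  have hpm1 : (0:ℝ) ≤ p - 1 := by linarith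
  have hs2 : p - 1 < s^2 := by
    rcases hθ with h | h
    · have h1 : Real.sqrt (p-1) < -s := by rw [hsdef]; linarith
      nlinarith [Real.sq_sqrt hpm1, Real.sqrt_nonneg (p-1)]
    · have h1 : Real.sqrt (p-1) < s := by rw [hsdef]; linarith
      nlinarith [Real.sq_sqrt hpm1, Real.sqrt_nonneg (p-1)]
  rcases eq_or_lt_of_le hp1 with hpe | hpg
  · -- p = 1
    subst hpe
    have hs2' : (0:ℝ) < s^2 := by nlinarith
    have hsle : s^2 ≤ 1 := by rw [hsdef]; nlinarith
    set t : ℝ := Real.exp s with htdef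
    have ht0 : 0 < t := Real.exp_pos s
    have h1t : (0:ℝ) < 1 + t := by linarith
    set c : ℝ := 1/(1+t) with hcdef
    have h1c : 1 - c = t/(1+t) := by rw [hcdef]; field_simp; ring
    have hratio : (1-c)/c = t := by rw [h1c, hcdef]; field_simp
    refine ⟨1, 0, c, by norm_num, le_refl 0, by rw [hcdef]; positivity, ?_, ?_, ?_⟩
    · rw [hcdef, div_lt_one h1t]; linarith
    · rw [Real.one_rpow, Real.zero_rpow one_ne_zero]; norm_num
    · simp only [div_one, zero_mul, add_zero, one_mul, Real.one_rpow, Real.rpow_one]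
      rw [hratio, htdef, ← Real.exp_mul]
      have hhalf : Real.exp (s/2) * Real.exp (s/2) = Real.exp s := by
        rw [← Real.exp_add]; congr 1; ring
      have hev : Real.exp (s/2)^2 = Real.exp s := by rw [sq]; exact hhalf
      have hcc : c*(1-c) = (Real.exp (s/2)/(1+Real.exp s))^2 := by
        rw [h1c, hcdef, div_pow, hev, htdef]
        field_simp
      rw [← htdef] at hcc
      rw [hcc, sq_rpow_helper _ _ (by positivity), Real.rpow_one]
      rw [div_mul_eq_mul_div, lt_div_iff₀ (by positivity), one_mul]
      -- 1 + t < exp(s/2) * (1 + exp (s*s))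
      have hcosh2 : 1 + t = Real.exp (s/2) * (2*Real.cosh (s/2)) := by
        have h := two_cosh_form (s/2)
        rw [show 2*(s/2) = s by ring] at h
        rw [htdef]; exact h
      have hch : 2*Real.cosh (s/2) ≤ 2*Real.exp (s^2/8) := by
        have h := Real.cosh_le_exp_half_sq (s/2)
        rw [show (s/2)^2/2 = s^2/8 by ring] at h; linarith
      have hz : Real.exp (s^2/8) < 1 + s^2/2 := by
        have hz0 : (0:ℝ) < s^2/8 := by positivity
        have he3 : Real.exp (s^2/8) < 3 := by
          have h1 : Real.exp (s^2/8) ≤ Real.exp 1 := Real.exp_le_exp.2 (by nlinarith)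
          have h2 : Real.exp 1 < 2.7182818286 := Real.exp_one_lt_d9
          linarith [(by norm_num : (2.7182818286:ℝ) < 3)]
        have hneg := Real.add_one_le_exp (-(s^2/8))
        have hprod : Real.exp (-(s^2/8)) * Real.exp (s^2/8) = 1 := by
          rw [← Real.exp_add]; simp
        nlinarith [mul_le_mul_of_nonneg_right hneg (Real.exp_pos (s^2/8)).le,
          Real.exp_pos (s^2/8)]
      have hexps : 2 + s^2 ≤ 1 + Real.exp (s*s) := by
        have h := Real.add_one_le_exp (s^2)
        rw [show s*s = s^2 by ring]; linarith
      calc 1 + t = Real.exp (s/2) * (2*Real.cosh (s/2)) := hcosh2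
        _ ≤ Real.exp (s/2) * (2*Real.exp (s^2/8)) :=
            mul_le_mul_of_nonneg_left hch (Real.exp_pos _).le
        _ < Real.exp (s/2) * (1 + Real.exp (s*s)) := by
            apply mul_lt_mul_of_pos_left _ (Real.exp_pos _)
            calc (2:ℝ)*Real.exp (s^2/8) < 2 + s^2 := by linarith
              _ ≤ 1 + Real.exp (s*s) := hexps
  · -- 1 < p
    have hp1n : (p:ℝ) - 1 ≠ 0 := by linarith
    have hpn : (p:ℝ) ≠ 0 := by linarith
    obtain ⟨v, hv0, hkey⟩ := key_exp p s hpg hs2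
    set t : ℝ := Real.exp (2*v) with htdef
    have ht0 : 0 < t := Real.exp_pos _
    have h1t : (0:ℝ) < 1 + t := by linarith
    set c : ℝ := 1/(1+t) with hcdef
    have h1c : 1 - c = t/(1+t) := by rw [hcdef]; field_simp; ring
    have hratio : (1-c)/c = t := by rw [h1c, hcdef]; field_simp
    set α : ℝ := 2*(-(v*s)/(p-1)) with hadef
    set A : ℝ := 1 + Real.exp α with hAdef
    have hA : 0 < A := by rw [hAdef]; positivity
    set β : ℝ := -(2*v*s)/(p*(p-1)) with hbdef
    set a : ℝ := A ^ (-(1/p)) with haadef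
    have ha0 : 0 < a := by rw [haadef]; exact Real.rpow_pos_of_pos hA _
    set b : ℝ := a * Real.exp β with hbbdef
    have hb0 : 0 < b := by rw [hbbdef]; positivity
    set g : ℝ := 2*v*(s/p) with hgdef
    have hap : a^p = A⁻¹ := by
      rw [haadef, ← Real.rpow_mul hA.le, show -(1/p)*p = -1 by field_simp,
        Real.rpow_neg_one]
    have heβg : Real.exp β * Real.exp (-g) = Real.exp α := by
      rw [← Real.exp_add]; congr 1; rw [hbdef, hgdef, hadef]; field_simp; ring
    have heβp : Real.exp β ^ p = Real.exp α := by
      rw [← Real.exp_mul]; congr 1; rw [hbdef, hadef]; field_simp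
    have hegp : Real.exp g ^ p = Real.exp (2*(v*s)) := by
      rw [← Real.exp_mul]; congr 1; rw [hgdef]; field_simp
    have heβ2 : Real.exp g * Real.exp α = Real.exp β := by
      rw [← Real.exp_add]; congr 1; rw [hbdef, hgdef, hadef]; field_simp; try ring
    have hD : ((1-c)/c) ^ (s/p) = Real.exp g := by
      rw [hratio, htdef, ← Real.exp_mul]
    have hsum : a^p + b^p = 1 := by
      have hbp : b^p = Real.exp α * A⁻¹ := by
        rw [hbbdef, Real.mul_rpow ha0.le (Real.exp_pos β).le, hap, heβp]; ring
      rw [hap, hbp]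
      have hre : A⁻¹ + Real.exp α * A⁻¹ = (1 + Real.exp α) * A⁻¹ := by ring
      rw [hre, ← hAdef, mul_inv_cancel₀ hA.ne']
    have hterm1 : (a + b * Real.exp (-g))^p = A^(p-1) := by
      have e1 : a + b * Real.exp (-g) = a * A := by
        rw [hbbdef, mul_assoc, heβg, hAdef]; ring
      rw [e1, Real.mul_rpow ha0.le hA.le, hap,
        show A⁻¹ = A^(-1:ℝ) from (Real.rpow_neg_one A).symm, ← Real.rpow_add hA]
      congr 1; ring
    have hterm2 : (a * Real.exp g + b)^p = A^(p-1) * Real.exp (2*(v*s)) := by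
      have e2 : a * Real.exp g + b = a * Real.exp g * A := by
        rw [hbbdef, hAdef, mul_add, mul_one, mul_assoc, heβ2]
      rw [e2, Real.mul_rpow (by positivity) hA.le,
        Real.mul_rpow ha0.le (Real.exp_pos g).le, hap, hegp,
        show A⁻¹ = A^(-1:ℝ) from (Real.rpow_neg_one A).symm]
      have hre : A^(-1:ℝ) * Real.exp (2*(v*s)) * A^p
          = (A^(-1:ℝ) * A^p) * Real.exp (2*(v*s)) := by ring
      rw [hre, ← Real.rpow_add hA]
      congr 2
      ring
    have hpre : (c*(1-c))^(p/2) = Real.exp v ^ p / (1+t)^p := by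
      have hev : Real.exp v ^ 2 = t := by
        rw [sq, htdef, ← Real.exp_add]; congr 1; ring
      have hy : c*(1-c) = (Real.exp v/(1+t))^2 := by
        rw [h1c, hcdef, div_pow, hev, div_mul_div_comm, one_mul, sq]
      rw [hy, sq_rpow_helper _ _ (by positivity), Real.div_rpow (Real.exp_pos v).le h1t.le]
    refine ⟨a, b, c, ha0.le, hb0.le, by rw [hcdef]; positivity, ?_, hsum, ?_⟩
    · rw [hcdef, div_lt_one h1t]; linarith
    · rw [hD, ← Real.exp_neg, hterm1, hterm2, hpre, ← Real.exp_mul]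
      rw [div_mul_eq_mul_div, lt_div_iff₀ (by positivity), one_mul]
      have hfac : A^(p-1) + A^(p-1)*Real.exp (2*(v*s))
          = A^(p-1) * (1 + Real.exp (2*(v*s))) := by ring
      rw [hfac]
      exact hkey
end

section
/- Let 1 < p < 2 with conjugate exponent q = p/(p−1), and let δ > 0. Define a = (δ^q/(1+δ^q))^{1/p} and b = (1/(1+δ^q))^{1/p}. Then a^p + b^p = 1 and (a + b·δ⁻¹)^p + (a·δ + b)^p = (1 + δ^{−p})·(1 + δ^q)^{p−1}. -/
/-- Let `1 < p < 2` with conjugate exponent `q = p/(p−1)`, and let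
`δ > 0`.  Define `a = (δ^q/(1+δ^q))^(1/p)` and `b = (1/(1+δ^q))^(1/p)`.  Then
`a^p + b^p = 1` and `(a + b·δ⁻¹)^p + (a·δ + b)^p = (1 + δ^(−p))·(1 + δ^q)^(p−1)`. -/
theorem stmt_1 (p q δ a b : ℝ) (hp1 : 1 < p) (hp2 : p < 2) (hq : q = p / (p - 1))
    (hδ : 0 < δ)
    (ha : a = (δ ^ q / (1 + δ ^ q)) ^ (1 / p))
    (hb : b = (1 / (1 + δ ^ q)) ^ (1 / p)) :
    a ^ p + b ^ p = 1 ∧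
      (a + b * δ⁻¹) ^ p + (a * δ + b) ^ p = (1 + δ ^ (-p)) * (1 + δ ^ q) ^ (p - 1) := by
  have hp0 : (0:ℝ) < p := by linarith
  have hpne : p ≠ 0 := ne_of_gt hp0
  have hpm1 : p - 1 ≠ 0 := ne_of_gt (by linarith)
  have hs : (0:ℝ) < δ ^ q := Real.rpow_pos_of_pos hδ q
  have hD : (0:ℝ) < 1 + δ ^ q := by linarith
  have hc : (0:ℝ) < (1 + δ ^ q) ^ (1 / p) := Real.rpow_pos_of_pos hD _
  have hcp : ((1 + δ ^ q) ^ (1 / p)) ^ p = 1 + δ ^ q := by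
    rw [← Real.rpow_mul hD.le, one_div, inv_mul_cancel₀ hpne, Real.rpow_one]
  have hqp : q * (1 / p) = q - 1 := by
    rw [hq]; field_simp; ring
  have hdq : δ ^ (q - 1) * δ = δ ^ q := by
    nth_rewrite 2 [← Real.rpow_one δ]
    rw [← Real.rpow_add hδ]; ring_nf
  have hdq1 : (0:ℝ) ≤ δ ^ (q - 1) := (Real.rpow_pos_of_pos hδ _).le
  have haa : a = δ ^ (q - 1) / (1 + δ ^ q) ^ (1 / p) := by
    rw [ha, Real.div_rpow hs.le hD.le, ← Real.rpow_mul hδ.le, hqp]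
  have hbb : b = 1 / (1 + δ ^ q) ^ (1 / p) := by
    rw [hb, Real.div_rpow zero_le_one hD.le, Real.one_rpow]
  have h1 : a ^ p = δ ^ q / (1 + δ ^ q) := by
    rw [ha, ← Real.rpow_mul (div_nonneg hs.le hD.le), one_div,
      inv_mul_cancel₀ hpne, Real.rpow_one]
  have h2 : b ^ p = 1 / (1 + δ ^ q) := by
    rw [hb, ← Real.rpow_mul (div_nonneg zero_le_one hD.le),
      show 1 / p * p = 1 by field_simp, Real.rpow_one]
  constructor
  · rw [h1, h2]; field_simp; ring
  · have e1 : a + b * δ⁻¹ = δ⁻¹ * (1 + δ ^ q) / (1 + δ ^ q) ^ (1 / p) := by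
      rw [haa, hbb]
      field_simp
      linear_combination hdq
    have e2 : a * δ + b = (1 + δ ^ q) / (1 + δ ^ q) ^ (1 / p) := by
      rw [haa, hbb]
      field_simp
      linear_combination hdq
    have hDp : (1 + δ ^ q) ^ (p - 1) = (1 + δ ^ q) ^ p / (1 + δ ^ q) := by
      rw [Real.rpow_sub hD, Real.rpow_one]
    rw [e1, e2, Real.div_rpow (mul_nonneg (inv_nonneg.mpr hδ.le) hD.le) hc.le,
      Real.div_rpow hD.le hc.le, hcp,
      Real.mul_rpow (inv_nonneg.mpr hδ.le) hD.le, Real.inv_rpow hδ.le,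
      ← Real.rpow_neg hδ.le, hDp]
    ring
end

section
/- Let 1 < p < 2 with conjugate exponent q = p/(p−1), and let θ ∈ [0,1] satisfy either 0 ≤ θ < (1 − √(p−1))/2 or (1 + √(p−1))/2 < θ ≤ 1. Then there exists c ∈ (0,1) such that, setting δ = ((1−c)/c)^{(2θ−1)/p}, one has (c(1−c))^{p/2} · (1 + δ^{−p}) · (1 + δ^q)^{p−1} > 1. -/
open Real Filter Set

noncomputable def auxL (x : ℝ) : ℝ := Real.exp x / (1 + Real.exp x)

noncomputable def auxg (p a u : ℝ) : ℝ :=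
  (p/2)*u - p*Real.log (1+Real.exp u)
    + Real.log (1+Real.exp (-a*u)) + (p-1)*Real.log (1+Real.exp (a/(p-1)*u))

noncomputable def auxg' (p a u : ℝ) : ℝ :=
  p/2 - p * auxL u - a * auxL (-a*u) + a * auxL (a/(p-1)*u)

lemma ell_deriv (x : ℝ) :
    HasDerivAt (fun x => Real.log (1 + Real.exp x)) (Real.exp x / (1 + Real.exp x)) x := by
  have h : HasDerivAt (fun x => 1 + Real.exp x) (Real.exp x) x :=
    (Real.hasDerivAt_exp x).const_add 1
  exact h.log (by positivity)

lemma L_deriv (x : ℝ) :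
    HasDerivAt (fun x => Real.exp x / (1 + Real.exp x)) (Real.exp x / (1 + Real.exp x) ^ 2) x := by
  have h1 := Real.hasDerivAt_exp x
  have h2 : HasDerivAt (fun x => 1 + Real.exp x) (Real.exp x) x := h1.const_add 1
  have hpos : (0:ℝ) < 1 + Real.exp x := by positivity
  have := h1.div h2 (ne_of_gt hpos)
  refine this.congr_deriv ?_
  field_simp
  ring

lemma ell_deriv_scaled (k x : ℝ) :
    HasDerivAt (fun x => Real.log (1 + Real.exp (k * x)))
      (k * (Real.exp (k * x) / (1 + Real.exp (k * x)))) x := by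
  have h := (ell_deriv (k * x)).comp x ((hasDerivAt_id x).const_mul k)
  simpa [mul_comm, Function.comp_def] using h

lemma L_deriv_scaled (k x : ℝ) :
    HasDerivAt (fun x => Real.exp (k * x) / (1 + Real.exp (k * x)))
      (k * (Real.exp (k * x) / (1 + Real.exp (k * x)) ^ 2)) x := by
  have h := (L_deriv (k * x)).comp x ((hasDerivAt_id x).const_mul k)
  simpa [mul_comm, Function.comp_def] using h

lemma auxg_hasDeriv (p a : ℝ) (hp : p ≠ 1) (u : ℝ) :
    HasDerivAt (fun u => auxg p a u) (auxg' p a u) u := by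
  have h1 : HasDerivAt (fun u : ℝ => (p/2)*u) (p/2) u := by
    simpa using (hasDerivAt_id u).const_mul (p/2)
  have h2 := (ell_deriv u).const_mul p
  have h3 := ell_deriv_scaled (-a) u
  have h4 := (ell_deriv_scaled (a/(p-1)) u).const_mul (p-1)
  have h := ((h1.sub h2).add h3).add h4
  refine h.congr_deriv ?_
  unfold auxg' auxL
  have hne : p - 1 ≠ 0 := sub_ne_zero.mpr hp
  field_simp
  ring

lemma auxg'_hasDeriv (p a : ℝ) :
    HasDerivAt (fun u => auxg' p a u)
      ((1/4) * (-p + a^2 + a*(a/(p-1)))) 0 := by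
  have h1 : HasDerivAt (fun _ : ℝ => p/2) 0 (0:ℝ) := hasDerivAt_const _ _
  have h2 := (L_deriv 0).const_mul p
  have h3 := (L_deriv_scaled (-a) 0).const_mul a
  have h4 := (L_deriv_scaled (a/(p-1)) 0).const_mul a
  have h := ((h1.sub h2).add (h3.neg)).add h4
  have heq : HasDerivAt (fun u => auxg' p a u)
      (0 - p * (Real.exp 0 / (1 + Real.exp 0) ^ 2)
        + -(a * (-a * (Real.exp (-a*0) / (1 + Real.exp (-a*0)) ^ 2)))
        + a * (a/(p-1) * (Real.exp (a/(p-1)*0) / (1 + Real.exp (a/(p-1)*0)) ^ 2)) ) 0 := by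
    exact h
  convert heq using 1
  rw [Real.exp_zero]
  norm_num
  ring

theorem key (p a : ℝ) (hp1 : 1 < p) (ha : p - 1 < a ^ 2) :
    ∃ u : ℝ, 0 < u ∧ 0 < auxg p a u := by
  have hp0 : (0:ℝ) < p - 1 := by linarith
  have hpne : p ≠ 1 := by linarith
  -- g' 0 = 0
  have hg'0 : auxg' p a 0 = 0 := by
    unfold auxg' auxL
    norm_num [Real.exp_zero]
    ring
  -- K > 0
  have hK : 0 < (1/4) * (-p + a^2 + a*(a/(p-1))) := by
    have : -p + a^2 + a*(a/(p-1)) = (a^2 - (p-1)) * (p/(p-1)) := by field_simp; ring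
    rw [this]
    have h1 : 0 < a^2 - (p-1) := by linarith
    have h2 : 0 < p/(p-1) := by positivity
    positivity
  -- slope of g' tends to K
  have hslope := hasDerivAt_iff_tendsto_slope.mp (auxg'_hasDeriv p a)
  have hev : ∀ᶠ u in nhdsWithin (0:ℝ) {(0:ℝ)}ᶜ, 0 < slope (fun u => auxg' p a u) 0 u :=
    hslope.eventually (eventually_gt_nhds hK)
  rw [eventually_nhdsWithin_iff] at hev
  rw [Metric.eventually_nhds_iff] at hev
  obtain ⟨ε, hε, hball⟩ := hev
  -- g' > 0 on (0, ε)
  have hg'pos : ∀ u : ℝ, 0 < u → u < ε → 0 < auxg' p a u := by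
    intro u hu1 hu2
    have hd : dist u 0 < ε := by rw [Real.dist_eq]; rw [sub_zero]; rw [abs_of_pos hu1]; exact hu2
    have := hball hd (by simp [ne_of_gt hu1])
    rw [slope_def_field] at this
    have h2 : 0 < (auxg' p a u - auxg' p a 0) / (u - 0) := this
    rw [hg'0, sub_zero, sub_zero] at h2
    have := mul_pos h2 hu1
    rwa [div_mul_cancel₀ _ (ne_of_gt hu1)] at this
  -- g 0 = 0
  have hg0 : auxg p a 0 = 0 := by
    unfold auxg
    norm_num [Real.exp_zero]
    ring
  -- strict mono on [0, ε/2]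
  have hmono : StrictMonoOn (fun u => auxg p a u) (Set.Icc 0 (ε/2)) := by
    apply strictMonoOn_of_deriv_pos (convex_Icc _ _)
    · exact fun x _ => ((auxg_hasDeriv p a hpne x).differentiableAt.continuousAt).continuousWithinAt
    · intro u hu
      rw [interior_Icc] at hu
      rw [(auxg_hasDeriv p a hpne u).deriv]
      exact hg'pos u hu.1 (by linarith [hu.2])
  refine ⟨ε/2, by linarith, ?_⟩
  have := hmono (Set.left_mem_Icc.mpr (by linarith)) (Set.right_mem_Icc.mpr (by linarith)) (by linarith)
  simpa [hg0] using this



/-- Let `1 < p < 2` with conjugate exponent `q = p/(p−1)`, and let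
`θ ∈ [0,1]` satisfy either `0 ≤ θ < (1 − √(p−1))/2` or `(1 + √(p−1))/2 < θ ≤ 1`.  Then
there exists `c ∈ (0,1)` such that, setting `δ = ((1−c)/c)^((2θ−1)/p)`, one has
`(c(1−c))^(p/2) · (1 + δ^(−p)) · (1 + δ^q)^(p−1) > 1`. -/
theorem stmt_2 (p q θ : ℝ) (hp1 : 1 < p) (hp2 : p < 2) (hq : q = p / (p - 1))
    (hθ0 : 0 ≤ θ) (hθ1 : θ ≤ 1)
    (hθ : θ < (1 - Real.sqrt (p - 1)) / 2 ∨ (1 + Real.sqrt (p - 1)) / 2 < θ) :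
    ∃ c : ℝ, 0 < c ∧ c < 1 ∧
      1 < (c * (1 - c)) ^ (p / 2) * (1 + (((1 - c) / c) ^ ((2 * θ - 1) / p)) ^ (-p)) *
        (1 + (((1 - c) / c) ^ ((2 * θ - 1) / p)) ^ q) ^ (p - 1) := by
  have hpne : p ≠ 0 := by linarith
  have hp1ne : p - 1 ≠ 0 := by intro h; nlinarith
  have hsq : Real.sqrt (p-1) ^ 2 = p - 1 := Real.sq_sqrt (by linarith)
  have hsqnn := Real.sqrt_nonneg (p-1)
  set a : ℝ := 2*θ - 1 with hadef
  have ha : p - 1 < a ^ 2 := by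
    rcases hθ with h | h
    · nlinarith
    · nlinarith
  obtain ⟨u, hu, hgu⟩ := key p a hp1 ha
  have he := Real.exp_pos u
  have hden : (0:ℝ) < 1 + Real.exp u := by positivity
  refine ⟨(1 + Real.exp u)⁻¹, by positivity, ?_, ?_⟩
  · rw [inv_lt_one_iff₀]; right; linarith
  set c : ℝ := (1 + Real.exp u)⁻¹ with hcdef
  have h1c : 1 - c = Real.exp u / (1 + Real.exp u) := by
    rw [hcdef]; field_simp; ring
  have hrc : (1 - c)/c = Real.exp u := by
    rw [h1c, hcdef]; field_simp
  have e1 : (((1 - c)/c) ^ (a/p)) ^ (-p) = Real.exp (-a*u) := by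
    rw [hrc, ← Real.rpow_mul he.le, Real.rpow_def_of_pos he, Real.log_exp]
    congr 1
    field_simp
  have e2 : (((1 - c)/c) ^ (a/p)) ^ q = Real.exp (a/(p-1)*u) := by
    rw [hrc, ← Real.rpow_mul he.le, Real.rpow_def_of_pos he, Real.log_exp, hq]
    congr 1
    field_simp
  have hccpos : (0:ℝ) < c * (1 - c) := by
    rw [h1c, hcdef]; positivity
  have hccval : c * (1 - c) = Real.exp u / (1 + Real.exp u)^2 := by
    rw [h1c, hcdef]; field_simp
  have hlog : Real.log (c * (1 - c)) = u - 2 * Real.log (1 + Real.exp u) := by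
    rw [hccval, Real.log_div (ne_of_gt he) (by positivity), Real.log_exp, Real.log_pow]
    push_cast; ring
  have hBpos : (0:ℝ) < 1 + Real.exp (-a*u) := by positivity
  have hCpos : (0:ℝ) < 1 + Real.exp (a/(p-1)*u) := by positivity
  rw [e1, e2, Real.rpow_def_of_pos hccpos, Real.rpow_def_of_pos hCpos]
  have hprod : Real.exp (Real.log (c * (1 - c)) * (p/2)) * (1 + Real.exp (-a*u)) *
      Real.exp (Real.log (1 + Real.exp (a/(p-1)*u)) * (p-1))
      = Real.exp (Real.log (c * (1 - c)) * (p/2) + Real.log (1 + Real.exp (-a*u))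
          + Real.log (1 + Real.exp (a/(p-1)*u)) * (p-1)) := by
    rw [Real.exp_add, Real.exp_add, Real.exp_log hBpos]
  rw [hprod]
  calc (1:ℝ) = Real.exp 0 := Real.exp_zero.symm
    _ < _ := by
        apply Real.exp_lt_exp.mpr
        have heq : Real.log (c * (1 - c)) * (p/2) + Real.log (1 + Real.exp (-a*u))
            + Real.log (1 + Real.exp (a/(p-1)*u)) * (p-1) = auxg p a u := by
          rw [hlog]; unfold auxg; ring
        rw [heq]; exact hgu
end

section
/- Let θ ∈ [0,1] with θ ≠ 1/2. Then there exists c ∈ (0,1) such that (c(1−c))^{1/2} · (1 + ((1−c)/c)^{2θ−1}) > 1. -/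
open Real

/-- Key scalar estimate: for `t ≠ 0` with `|t| ≤ 1`, `e^{t/2} + e^{-t/2} < 1 + e^{t²}`. -/
lemma key_ineq {t : ℝ} (ht : t ≠ 0) (ht1 : |t| ≤ 1) :
    Real.exp (t / 2) + Real.exp (-(t / 2)) < 1 + Real.exp (t * t) := by
  have ht2 : t * t ≠ 0 := mul_ne_zero ht ht
  have h1 : t * t + 1 < Real.exp (t * t) := Real.add_one_lt_exp ht2
  -- bound e^{t/2} and e^{-t/2} via the third-order Taylor bound
  have hb : ∀ x : ℝ, |x| ≤ 1 →
      Real.exp x ≤ 1 + x + x ^ 2 / 2 + |x| ^ 3 * (2 / 9) := by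
    intro x hx
    have := Real.exp_bound hx (n := 3) (by norm_num)
    have hsum : ∑ m ∈ Finset.range 3, x ^ m / m.factorial = 1 + x + x ^ 2 / 2 := by
      norm_num [Finset.sum_range_succ]
    rw [hsum] at this
    have h2 : Real.exp x - (1 + x + x ^ 2 / 2) ≤ |x| ^ 3 * (2 / 9) := by
      have := (abs_sub_le_iff.1 this).1
      calc Real.exp x - (1 + x + x ^ 2 / 2) ≤ |x| ^ 3 * ((3 : ℕ).succ / ((3 : ℕ).factorial * 3)) := this
        _ = |x| ^ 3 * (2 / 9) := by norm_num [Nat.factorial]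
    linarith
  have hx1 : |t / 2| ≤ 1 := by
    rw [abs_div]
    simp only [abs_two]
    linarith
  have hx2 : |-(t / 2)| ≤ 1 := by rwa [abs_neg]
  have hA := hb (t / 2) hx1
  have hB := hb (-(t / 2)) hx2
  rw [abs_neg] at hB
  have habs : |t / 2| ^ 3 ≤ (t / 2) ^ 2 := by
    have h3 : |t / 2| ^ 3 = |t / 2| * |t / 2| ^ 2 := by ring
    have h4 : |t / 2| ^ 2 = (t / 2) ^ 2 := sq_abs _
    rw [h3, h4]
    nlinarith [sq_nonneg (t / 2), abs_nonneg (t / 2), hx1]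
  have htt : 0 < t * t := mul_self_pos.2 ht
  nlinarith [hA, hB, h1, habs]

/-- Let `θ ∈ [0,1]` with `θ ≠ 1/2`.  Then there exists `c ∈ (0,1)`
such that `(c(1−c))^(1/2) · (1 + ((1−c)/c)^(2θ−1)) > 1`. -/
theorem stmt_3 (θ : ℝ) (hθ0 : 0 ≤ θ) (hθ1 : θ ≤ 1) (hθ : θ ≠ 1 / 2) :
    ∃ c : ℝ, 0 < c ∧ c < 1 ∧
      1 < (c * (1 - c)) ^ ((1 : ℝ) / 2) * (1 + ((1 - c) / c) ^ (2 * θ - 1)) := by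
  set t : ℝ := 2 * θ - 1 with htdef
  have ht : t ≠ 0 := by
    intro h
    apply hθ
    have : 2 * θ - 1 = 0 := h
    linarith
  have ht1 : |t| ≤ 1 := abs_le.2 ⟨by simp [htdef]; linarith, by simp [htdef]; linarith⟩
  set E : ℝ := Real.exp t with hE
  have hEpos : 0 < E := Real.exp_pos t
  refine ⟨1 / (1 + E), by positivity, ?_, ?_⟩
  · rw [div_lt_one (by positivity)]; linarith
  · have hc : (1 : ℝ) - 1 / (1 + E) = E / (1 + E) := by
      field_simp
      ring
    rw [hc]
    have hratio : E / (1 + E) / (1 / (1 + E)) = E := by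
      field_simp
    rw [hratio]
    have hEt : E ^ (2 * θ - 1) = Real.exp (t * t) := by
      rw [hE, ← htdef, Real.rpow_def_of_pos (Real.exp_pos t), Real.log_exp]
    rw [hEt]
    have hsq : Real.exp (t / 2) ^ 2 = E := by
      rw [sq, ← Real.exp_add, hE]; ring_nf
    have hprod : 1 / (1 + E) * (E / (1 + E)) = (Real.exp (t / 2) / (1 + E)) ^ 2 := by
      rw [div_pow, hsq, div_mul_div_comm, one_mul, sq]
    rw [hprod, ← Real.rpow_natCast (Real.exp (t / 2) / (1 + E)) 2, ← Real.rpow_mul (by positivity)]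
    norm_num
    have hkey := key_ineq ht ht1
    have hmul : Real.exp (-(t / 2)) * Real.exp (t / 2) = 1 := by
      rw [← Real.exp_add]; simp
    have hp : 0 < Real.exp (t / 2) := Real.exp_pos _
    rw [div_mul_eq_mul_div, lt_div_iff₀ (by positivity)]
    nlinarith [mul_pos (sub_pos.2 hkey) hp, hmul, hsq, hp]
end

section
/- Let 1 < p < 2 with conjugate exponent q = p/(p−1), let θ ∈ [0,1] and set λ = 2θ − 1. For t ∈ (−1/2, 1/2) set δ_t = ((1 − 2t)/(1 + 2t))^{λ/p}. Then (1 + δ_t^q)^{p−1} = 2^{p/q}·(1 − 2λ·t + 2λ²q·t²) + o(t²) as t → 0. -/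
open Filter Asymptotics Set Real Topology

lemma peano {f g : ℝ → ℝ} {a b c : ℝ}
    (hf : ∀ᶠ x in nhds 0, HasDerivAt f (g x) x)
    (hg : HasDerivAt g c 0) (ha : f 0 = a) (hb : g 0 = b) :
    (fun t : ℝ => f t - (a + b * t + c / 2 * t ^ 2)) =o[nhds 0] (fun t : ℝ => t ^ 2) := by
  rw [isLittleO_iff_tendsto (by
    intro x hx
    have : x = 0 := by nlinarith [sq_nonneg x]
    simp [this, ha])]
  have h1 : Tendsto (fun t : ℝ => (f t - (a + b * t + c / 2 * t ^ 2)) / t ^ 2)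
      (𝓝[≠] (0:ℝ)) (nhds 0) := by
    apply HasDerivAt.lhopital_zero_nhdsNE
      (f' := fun x => g x - (b + c * x)) (g' := fun x => 2 * x)
    · filter_upwards [eventually_nhdsWithin_of_eventually_nhds hf] with x hx
      have hq : HasDerivAt (fun t : ℝ => a + b * t + c / 2 * t ^ 2) (b + c * x) x := by
        have h1 : HasDerivAt (fun t : ℝ => b * t) b x := by
          simpa using (hasDerivAt_id x).const_mul b
        have h2 : HasDerivAt (fun t : ℝ => c / 2 * t ^ 2) (c * x) x := by
          have := (hasDerivAt_pow 2 x).const_mul (c / 2)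
          refine this.congr_deriv ?_
          ring
        simpa using (h1.const_add a).fun_add h2
      exact hx.sub hq
    · filter_upwards with x
      simpa using hasDerivAt_pow 2 x
    · filter_upwards [self_mem_nhdsWithin] with x hx
      simpa using hx
    · have hc : ContinuousAt f 0 := (hf.self_of_nhds).continuousAt
      have hcp : Continuous fun t : ℝ => a + b * t + c / 2 * t ^ 2 := by continuity
      have h3 := hc.tendsto.sub (hcp.tendsto 0)
      have h4 : Tendsto (fun t : ℝ => f t - (a + b * t + c / 2 * t ^ 2)) (nhds 0) (nhds 0) := by
        simpa [ha] using h3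
      exact h4.mono_left nhdsWithin_le_nhds
    · have : Tendsto (fun t : ℝ => t ^ 2) (nhds 0) (nhds 0) := by
        simpa using (continuous_pow 2).tendsto (0 : ℝ)
      exact this.mono_left nhdsWithin_le_nhds
    · have hs := hasDerivAt_iff_tendsto_slope.mp hg
      have h2 : Tendsto (fun x : ℝ => ((g x - b) / x - c) / 2) (𝓝[≠] (0:ℝ)) (nhds 0) := by
        have h3 : Tendsto (fun x : ℝ => (g x - b) / x - c) (𝓝[≠] (0:ℝ)) (nhds (c - c)) := by
          apply Tendsto.sub_const
          have heq : (fun x : ℝ => (g x - b) / x) = slope g 0 := by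
            funext x; simp [slope_def_field, hb]
          rw [heq]; exact hs
        simpa using h3.div_const 2
      apply h2.congr'
      filter_upwards [self_mem_nhdsWithin] with x hx
      have hx' : (x:ℝ) ≠ 0 := hx
      field_simp
      ring
  have h2 : Tendsto (fun t : ℝ => (f t - (a + b * t + c / 2 * t ^ 2)) / t ^ 2)
      (pure (0:ℝ)) (nhds 0) := by
    have := tendsto_pure_nhds (fun t : ℝ => (f t - (a + b * t + c / 2 * t ^ 2)) / t ^ 2) 0
    simpa [ha] using this
  have h3 := tendsto_sup.mpr ⟨h1, h2⟩
  rwa [nhdsNE_sup_pure] at h3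


noncomputable def D8 (p r t : ℝ) : ℝ :=
  (p - 1) * ((1 + ((1 - 2*t)/(1 + 2*t)) ^ r) ^ (p - 2) *
    ((r * ((1 - 2*t)/(1 + 2*t)) ^ (r - 1)) * (-4 / (1 + 2*t) ^ 2)))

lemma aux1 (s : ℝ) {t : ℝ} (ht : t ∈ Set.Ioo (-(1/2):ℝ) (1/2)) :
    HasDerivAt (fun u : ℝ => ((1 - 2*u)/(1 + 2*u)) ^ s)
      (s * ((1 - 2*t)/(1 + 2*t)) ^ (s - 1) * (-4 / (1 + 2*t) ^ 2)) t := by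
  obtain ⟨ht1, ht2⟩ := ht
  have hd : (0:ℝ) < 1 + 2*t := by linarith
  have hn : (0:ℝ) < 1 - 2*t := by linarith
  have hpos : 0 < (1 - 2*t)/(1 + 2*t) := div_pos hn hd
  have h1 : HasDerivAt (fun u : ℝ => 1 - 2*u) (-2) t := by
    simpa using ((hasDerivAt_id t).const_mul 2).const_sub 1
  have h2 : HasDerivAt (fun u : ℝ => 1 + 2*u) 2 t := by
    simpa using ((hasDerivAt_id t).const_mul 2).const_add 1
  have h4 : HasDerivAt (fun u : ℝ => (1 - 2*u)/(1 + 2*u)) (-4 / (1 + 2*t) ^ 2) t := by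
    refine (h1.fun_div h2 hd.ne').congr_deriv ?_
    field_simp
    ring
  have h5 := h4.rpow_const (p := s) (Or.inl hpos.ne')
  convert h5 using 1
  ring

lemma aux2 (p r : ℝ) {t : ℝ} (ht : t ∈ Set.Ioo (-(1/2):ℝ) (1/2)) :
    HasDerivAt (fun u : ℝ => (1 + ((1 - 2*u)/(1 + 2*u)) ^ r) ^ (p - 1)) (D8 p r t) t := by
  obtain ⟨ht1, ht2⟩ := ht
  have hd : (0:ℝ) < 1 + 2*t := by linarith
  have hn : (0:ℝ) < 1 - 2*t := by linarith
  have hpos : 0 < (1 - 2*t)/(1 + 2*t) := div_pos hn hd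
  have hbase : 0 < 1 + ((1 - 2*t)/(1 + 2*t)) ^ r := by positivity
  have h5 := ((aux1 r ⟨ht1, ht2⟩).const_add 1).rpow_const (p := p - 1) (Or.inl hbase.ne')
  convert h5 using 1
  unfold D8
  rw [show p - 1 - 1 = p - 2 by ring]
  ring

lemma aux3 (p r : ℝ) :
    HasDerivAt (fun t => D8 p r t) (4 * p * (p - 1) * r ^ 2 * (2:ℝ) ^ (p - 1)) 0 := by
  have h0 : (0:ℝ) ∈ Set.Ioo (-(1/2):ℝ) (1/2) := by norm_num
  have e1 : ((1:ℝ) - 2*0)/(1 + 2*0) = 1 := by norm_num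
  have hbase : 0 < 1 + ((1 - 2*(0:ℝ))/(1 + 2*0)) ^ r := by
    rw [e1, Real.one_rpow]; norm_num
  have hF2 := ((aux1 r h0).const_add 1).rpow_const (p := p - 2) (Or.inl hbase.ne')
  have hG : HasDerivAt (fun u : ℝ => -4 / (1 + 2*u) ^ 2) 16 0 := by
    have h2 : HasDerivAt (fun u : ℝ => 1 + 2*u) 2 0 := by
      simpa using ((hasDerivAt_id (0:ℝ)).const_mul 2).const_add 1
    have hden := h2.fun_pow 2
    have := (hasDerivAt_const (0:ℝ) (-4:ℝ)).fun_div hden (by norm_num)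
    refine this.congr_deriv ?_
    norm_num
  have hA := (aux1 (r - 1) h0).const_mul r
  have hF3 := hA.fun_mul hG
  have hD := (hF2.fun_mul hF3).const_mul (p - 1)
  refine hD.congr_deriv ?_
  rw [e1]
  simp only [Real.one_rpow]
  norm_num
  have e2 : (2:ℝ) ^ (p - 2) = (2:ℝ) ^ (p - 1) / 2 := by
    rw [show p - 2 = (p - 1) - 1 by ring, Real.rpow_sub (by norm_num), Real.rpow_one]
  have e3 : (2:ℝ) ^ (p - 2 - 1) = (2:ℝ) ^ (p - 1) / 4 := by
    rw [show p - 2 - 1 = (p - 1) - 2 by ring, Real.rpow_sub (by norm_num)]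
    norm_num
  rw [e2, e3]
  ring

/-- Let `1 < p < 2` with conjugate exponent `q = p/(p−1)`, let
`θ ∈ [0,1]` and set `λ = 2θ − 1`.  For `t ∈ (−1/2, 1/2)` set
`δ_t = ((1 − 2t)/(1 + 2t))^(λ/p)`.  Then
`(1 + δ_t^q)^(p−1) = 2^(p/q)·(1 − 2λ·t + 2λ²q·t²) + o(t²)` as `t → 0`. -/
theorem stmt_8 (p q θ l : ℝ) (hp1 : 1 < p) (hp2 : p < 2) (hq : q = p / (p - 1))
    (hθ0 : 0 ≤ θ) (hθ1 : θ ≤ 1) (hl : l = 2 * θ - 1) :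
    (fun t : ℝ => (1 + (((1 - 2 * t) / (1 + 2 * t)) ^ (l / p)) ^ q) ^ (p - 1)
        - (2 : ℝ) ^ (p / q) * (1 - 2 * l * t + 2 * l ^ 2 * q * t ^ 2))
      =o[nhds 0] (fun t : ℝ => t ^ 2) := by
  have hp0 : p ≠ 0 := by linarith
  have hp1' : (0:ℝ) < p - 1 := by linarith
  have hp1n : p - 1 ≠ 0 := hp1'.ne'
  set r : ℝ := l / (p - 1) with hr
  have hpq : p / q = p - 1 := by rw [hq]; field_simp
  have hrl : r * (p - 1) = l := by rw [hr]; field_simp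
  have hlpq : l / p * q = r := by
    rw [hq, hr]; field_simp
  set A : ℝ := (2:ℝ) ^ (p - 1) with hA
  have hE2 : (2:ℝ) ^ (p - 2) = A / 2 := by
    rw [hA, show p - 2 = (p - 1) - 1 by ring, Real.rpow_sub (by norm_num), Real.rpow_one]
  have ha : (1 + ((1 - 2*(0:ℝ))/(1 + 2*0)) ^ r) ^ (p - 1) = A := by
    rw [show ((1:ℝ) - 2*0)/(1 + 2*0) = 1 by norm_num, Real.one_rpow, hA]
    norm_num
  have hb : D8 p r 0 = -(2 * l * A) := by
    unfold D8
    rw [show ((1:ℝ) - 2*0)/(1 + 2*0) = 1 by norm_num]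
    simp only [Real.one_rpow]
    norm_num [hE2]
    rw [← hrl]
    ring
  have hg : HasDerivAt (fun t => D8 p r t) (4 * l ^ 2 * q * A) 0 := by
    convert aux3 p r using 1
    rw [hq, ← hrl]
    field_simp
    ring
  have hf : ∀ᶠ t in nhds (0:ℝ),
      HasDerivAt (fun u : ℝ => (1 + ((1 - 2*u)/(1 + 2*u)) ^ r) ^ (p - 1)) (D8 p r t) t := by
    filter_upwards [isOpen_Ioo.mem_nhds
      (show (0:ℝ) ∈ Set.Ioo (-(1/2):ℝ) (1/2) by norm_num)] with t ht
    exact aux2 p r ht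
  have key := peano hf hg ha hb
  refine key.congr' ?_ (EventuallyEq.refl _ _)
  filter_upwards [isOpen_Ioo.mem_nhds
    (show (0:ℝ) ∈ Set.Ioo (-(1/2):ℝ) (1/2) by norm_num)] with t ht
  obtain ⟨ht1, ht2⟩ := ht
  have hpos : (0:ℝ) < (1 - 2*t)/(1 + 2*t) := div_pos (by linarith) (by linarith)
  have hrw : (((1 - 2*t)/(1 + 2*t)) ^ (l/p)) ^ q = ((1 - 2*t)/(1 + 2*t)) ^ r := by
    rw [← Real.rpow_mul hpos.le, hlpq]
  rw [hpq, hrw, ← hA]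
  ring
end

section
/- Let 1 < p < 2 with conjugate exponent q = p/(p−1), let θ ∈ [0,1] and set λ = 2θ − 1. For t ∈ (−1/2, 1/2) set c_t = 1/2 + t, δ_t = ((1 − 2t)/(1 + 2t))^{λ/p}, γ_t = (c_t(1−c_t))^{p/2}, and 𝔪_t = γ_t·(1 + δ_t^{−p})·(1 + δ_t^q)^{p−1}. Then 𝔪_t = 1 + α·t² + o(t²) as t → 0, where α = 2(λ²q − p). -/
open Filter Asymptotics

def E (f : ℝ → ℝ) (c a b : ℝ) : Prop :=
  (fun t => f t - (c + a * t + b * t ^ 2)) =o[nhds (0:ℝ)] fun t => t ^ 2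

lemma abs_cube_o : (fun t : ℝ => |t| ^ 3) =o[nhds (0:ℝ)] fun t => t ^ 2 := by
  rw [isLittleO_iff]
  intro ε hε
  have h : ∀ᶠ t : ℝ in nhds 0, |t| < ε := by
    filter_upwards [Metric.ball_mem_nhds (0:ℝ) hε] with t ht
    simpa [Real.dist_eq] using ht
  filter_upwards [h] with t ht
  simp only [norm_pow, Real.norm_eq_abs, abs_abs]
  nlinarith [abs_nonneg t, sq_nonneg (|t|)]

lemma sq_O_id : (fun t : ℝ => t ^ 2) =O[nhds (0:ℝ)] fun t => t := by
  rw [isBigO_iff]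
  refine ⟨1, ?_⟩
  have h : ∀ᶠ t : ℝ in nhds 0, |t| < 1 := by
    filter_upwards [Metric.ball_mem_nhds (0:ℝ) one_pos] with t ht
    simpa [Real.dist_eq] using ht
  filter_upwards [h] with t ht
  simp only [norm_pow, Real.norm_eq_abs, one_mul]
  nlinarith [abs_nonneg t]

lemma E.tendsto {f : ℝ → ℝ} {c a b : ℝ} (hf : E f c a b) :
    Tendsto f (nhds 0) (nhds c) := by
  have h1 : Tendsto (fun t : ℝ => f t - (c + a * t + b * t ^ 2)) (nhds 0) (nhds 0) :=
    hf.isBigO.trans_tendsto (by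
      have : Tendsto (fun t : ℝ => t ^ 2) (nhds 0) (nhds (0 ^ 2 : ℝ)) :=
        (continuous_pow 2).tendsto 0
      simpa using this)
  have h2 : Tendsto (fun t : ℝ => c + a * t + b * t ^ 2) (nhds 0) (nhds c) := by
    have : Continuous fun t : ℝ => c + a * t + b * t ^ 2 := by continuity
    simpa using this.tendsto 0
  have := h1.add h2
  simpa using this

lemma E.isBigO_one {f : ℝ → ℝ} {c a b : ℝ} (hf : E f c a b) :
    f =O[nhds (0:ℝ)] fun _ => (1:ℝ) :=
  hf.tendsto.isBigO_one ℝ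

lemma E.isBigO_id {f : ℝ → ℝ} {a b : ℝ} (hf : E f 0 a b) :
    f =O[nhds (0:ℝ)] fun t => t := by
  have h1 : (fun t : ℝ => f t - (0 + a * t + b * t ^ 2)) =O[nhds (0:ℝ)] fun t => t :=
    hf.isBigO.trans sq_O_id
  have h2 : (fun t : ℝ => 0 + a * t + b * t ^ 2) =O[nhds (0:ℝ)] fun t => t := by
    have ha : (fun t : ℝ => a * t) =O[nhds (0:ℝ)] fun t => t :=
      (isBigO_refl (fun t : ℝ => t) _).const_mul_left a
    have hb : (fun t : ℝ => b * t ^ 2) =O[nhds (0:ℝ)] fun t => t :=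
      (sq_O_id.const_mul_left b)
    simpa using (ha.add hb).congr_left fun t => by ring
  have := h1.add h2
  simpa using this.congr_left fun t => by ring

lemma E.congr {f g : ℝ → ℝ} {c a b c' a' b' : ℝ} (hf : E f c a b)
    (h : ∀ t, f t = g t) (hc : c = c') (ha : a = a') (hb : b = b') : E g c' a' b' := by
  subst hc; subst ha; subst hb
  exact IsLittleO.congr_left hf fun t => by rw [h]

lemma E.add {f g : ℝ → ℝ} {c a b c' a' b' : ℝ} (hf : E f c a b) (hg : E g c' a' b') :
    E (fun t => f t + g t) (c + c') (a + a') (b + b') :=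
  (IsLittleO.add hf hg).congr_left fun t => by ring

lemma E.const_mul {f : ℝ → ℝ} {c a b : ℝ} (hf : E f c a b) (k : ℝ) :
    E (fun t => k * f t) (k * c) (k * a) (k * b) :=
  (hf.const_mul_left k).congr_left fun t => by ring

lemma E_const (c : ℝ) : E (fun _ => c) c 0 0 := by
  have : (fun t : ℝ => c - (c + 0 * t + 0 * t ^ 2)) = fun _ => (0:ℝ) := by
    funext t; ring
  unfold E; rw [this]
  exact isLittleO_zero _ _

lemma E.sub {f g : ℝ → ℝ} {c a b c' a' b' : ℝ} (hf : E f c a b) (hg : E g c' a' b') :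
    E (fun t => f t - g t) (c - c') (a - a') (b - b') :=
  (hf.add (hg.const_mul (-1))).congr (fun t => by ring) (by ring) (by ring) (by ring)

lemma E_id : E (fun t => t) 0 1 0 := by
  have : (fun t : ℝ => t - (0 + 1 * t + 0 * t ^ 2)) = fun _ => (0:ℝ) := by
    funext t; ring
  unfold E; rw [this]
  exact isLittleO_zero _ _

lemma E.mul {f g : ℝ → ℝ} {c a b c' a' b' : ℝ} (hf : E f c a b) (hg : E g c' a' b') :
    E (fun t => f t * g t) (c * c') (c * a' + a * c') (c * b' + a * a' + b * c') := by
  have hgO : g =O[nhds (0:ℝ)] fun _ => (1:ℝ) := hg.isBigO_one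
  have hPfO : (fun t : ℝ => c + a * t + b * t ^ 2) =O[nhds (0:ℝ)] fun _ => (1:ℝ) := by
    have : Continuous fun t : ℝ => c + a * t + b * t ^ 2 := by continuity
    exact (this.tendsto 0).isBigO_one ℝ
  have h1 : (fun t => (f t - (c + a * t + b * t ^ 2)) * g t) =o[nhds (0:ℝ)]
      fun t => t ^ 2 := by
    simpa using hf.mul_isBigO hgO
  have h2 : (fun t => (c + a * t + b * t ^ 2) * (g t - (c' + a' * t + b' * t ^ 2)))
      =o[nhds (0:ℝ)] fun t => t ^ 2 := by
    simpa using hPfO.mul_isLittleO hg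
  have h3 : (fun t : ℝ => (a * b' + b * a') * t ^ 3 + (b * b') * (t ^ 2 * t ^ 2))
      =o[nhds (0:ℝ)] fun t => t ^ 2 := by
    have h3a : (fun t : ℝ => t ^ 3) =o[nhds (0:ℝ)] fun t => t ^ 2 :=
      (abs_cube_o.congr_left fun t => (abs_pow t 3).symm).of_abs_left
    have h3b : (fun t : ℝ => t ^ 2 * t ^ 2) =o[nhds (0:ℝ)] fun t => t ^ 2 := by
      have := (isBigO_refl (fun t : ℝ => t ^ 2) (nhds 0)).mul_isLittleO
        (show (fun t : ℝ => t ^ 2) =o[nhds (0:ℝ)] fun _ => (1:ℝ) by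
          apply isLittleO_of_tendsto (by simp)
          have : Tendsto (fun t : ℝ => t ^ 2) (nhds 0) (nhds 0) := by
            simpa using (continuous_pow 2).tendsto (0:ℝ)
          simpa using this)
      simpa using this
    exact ((h3a.const_mul_left _).add (h3b.const_mul_left _))
  have := (h1.add h2).add h3
  exact this.congr_left fun t => by ring

lemma cube_o : (fun t : ℝ => t ^ 3) =o[nhds (0:ℝ)] fun t => t ^ 2 :=
  (abs_cube_o.congr_left fun t => (abs_pow t 3).symm).of_abs_left

/-- Generic second-order composition: if `Φ` has a quantitative second-order expansion
at 0 and `f` has a second-order expansion vanishing at 0, then `Φ ∘ f` has one. -/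
lemma E.comp {Φ : ℝ → ℝ} {c₀ d K ρ : ℝ} (hρ : 0 < ρ)
    (hΦ : ∀ y : ℝ, |y| ≤ ρ → |Φ y - (c₀ + y + d * y ^ 2)| ≤ K * |y| ^ 3)
    {f : ℝ → ℝ} {a b : ℝ} (hf : E f 0 a b) :
    E (fun t => Φ (f t)) c₀ a (b + d * a ^ 2) := by
  have hfO : f =O[nhds (0:ℝ)] fun t => t := hf.isBigO_id
  have hft : Tendsto f (nhds 0) (nhds 0) := hf.tendsto
  have hsmall : ∀ᶠ t : ℝ in nhds 0, |f t| ≤ ρ := by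
    have hev : ∀ᶠ y : ℝ in nhds 0, |y| ≤ ρ := by
      filter_upwards [Metric.ball_mem_nhds (0:ℝ) hρ] with y hy
      rw [Metric.mem_ball, Real.dist_eq, sub_zero] at hy
      exact hy.le
    exact hft.eventually hev
  have h1 : (fun t => Φ (f t) - (c₀ + f t + d * f t ^ 2)) =o[nhds (0:ℝ)]
      fun t => t ^ 2 := by
    have hb : (fun t => Φ (f t) - (c₀ + f t + d * f t ^ 2)) =O[nhds (0:ℝ)]
        fun t => f t ^ 3 := by
      rw [isBigO_iff]
      refine ⟨K, ?_⟩
      filter_upwards [hsmall] with t ht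
      simpa [Real.norm_eq_abs, abs_pow] using hΦ (f t) ht
    exact hb.trans_isLittleO ((hfO.pow 3).trans_isLittleO cube_o)
  have h2 : (fun t => f t - (a * t + b * t ^ 2)) =o[nhds (0:ℝ)] fun t => t ^ 2 :=
    IsLittleO.congr_left hf fun t => by ring
  have h3 : (fun t => f t ^ 2 - a ^ 2 * t ^ 2) =o[nhds (0:ℝ)] fun t => t ^ 2 := by
    have hdiff : (fun t => f t - a * t) =O[nhds (0:ℝ)] fun t => t ^ 2 := by
      have hA : (fun t => f t - (a * t + b * t ^ 2)) =O[nhds (0:ℝ)] fun t => t ^ 2 :=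
        h2.isBigO
      have hB : (fun t : ℝ => b * t ^ 2) =O[nhds (0:ℝ)] fun t => t ^ 2 :=
        (isBigO_refl _ _).const_mul_left b
      exact (hA.add hB).congr_left fun t => by ring
    have hsum : (fun t => f t + a * t) =O[nhds (0:ℝ)] fun t => t :=
      hfO.add ((isBigO_refl (fun t : ℝ => t) _).const_mul_left a)
    have hmul := hdiff.mul hsum
    have : (fun t : ℝ => t ^ 2 * t) =o[nhds (0:ℝ)] fun t => t ^ 2 :=
      cube_o.congr_left fun t => by ring
    exact (hmul.trans_isLittleO this).congr_left fun t => by ring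
  have := h1.add (h2.add (h3.const_mul_left d))
  exact this.congr_left fun t => by ring

lemma E.congr' {f g : ℝ → ℝ} {c a b : ℝ} (hf : E f c a b) (h : f =ᶠ[nhds (0:ℝ)] g) :
    E g c a b := by
  unfold E at hf ⊢
  refine hf.congr' ?_ EventuallyEq.rfl
  filter_upwards [h] with t ht
  rw [ht]

lemma exp_quadratic : ∀ y : ℝ, |y| ≤ 1 →
    |Real.exp y - (1 + y + (1/2) * y ^ 2)| ≤ 1 * |y| ^ 3 := by
  intro y hy
  have h := Real.exp_bound hy (n := 3) (by norm_num)
  have hsum : ∑ m ∈ Finset.range 3, y ^ m / m.factorial = 1 + y + (1/2) * y ^ 2 := by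
    simp [Finset.sum_range_succ, Nat.factorial]
    ring
  rw [hsum] at h
  have : |y| ^ 3 * ((3:ℕ).succ / ((3:ℕ).factorial * 3)) ≤ 1 * |y| ^ 3 := by
    have : ((3:ℕ).succ / ((3:ℕ).factorial * 3) : ℝ) = 4 / 18 := by
      norm_num [Nat.factorial]
    rw [this]
    nlinarith [abs_nonneg y, pow_nonneg (abs_nonneg y) 3]
  linarith
lemma log_quadratic : ∀ y : ℝ, |y| ≤ 1/2 →
    |Real.log (1 + y) - (0 + y + (-1/2) * y ^ 2)| ≤ 2 * |y| ^ 3 := by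
  intro y hy
  have h1 : |(-y : ℝ)| < 1 := by rw [abs_neg]; linarith [abs_nonneg y]
  have h := Real.abs_log_sub_add_sum_range_le h1 2
  have hsum : ∑ i ∈ Finset.range 2, (-y) ^ (i + 1) / (i + 1) = -y + y ^ 2 / 2 := by
    simp [Finset.sum_range_succ]
    ring
  rw [hsum] at h
  have h2 : (1 : ℝ) - (-y) = 1 + y := by ring
  rw [h2, abs_neg] at h
  have h3 : |y| ^ 3 / (1 - |y|) ≤ 2 * |y| ^ 3 := by
    have hpos : (0:ℝ) < 1 - |y| := by linarith [abs_nonneg y]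
    rw [div_le_iff₀ hpos]
    nlinarith [abs_nonneg y, pow_nonneg (abs_nonneg y) 3]
  calc |Real.log (1 + y) - (0 + y + (-1/2) * y ^ 2)|
      = |(-y + y ^ 2 / 2) + Real.log (1 + y)| := by
        congr 1; ring
    _ ≤ |y| ^ 3 / (1 - |y|) := h
    _ ≤ 2 * |y| ^ 3 := h3

lemma E.exp {f : ℝ → ℝ} {c a b : ℝ} (hf : E f c a b) :
    E (fun t => Real.exp (f t)) (Real.exp c) (Real.exp c * a)
      (Real.exp c * (b + a ^ 2 / 2)) := by
  have hg : E (fun t => f t - c) 0 a b :=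
    (hf.sub (E_const c)).congr (fun t => rfl) (by ring) (by ring) (by ring)
  have h1 : E (fun t => Real.exp (f t - c)) 1 a (b + (1/2) * a ^ 2) :=
    E.comp one_pos exp_quadratic hg
  have h2 := h1.const_mul (Real.exp c)
  refine h2.congr (fun t => ?_) (by ring) (by ring) (by ring)
  rw [← Real.exp_add]
  ring_nf

lemma E.log {f : ℝ → ℝ} {c a b : ℝ} (hc : 0 < c) (hf : E f c a b) :
    E (fun t => Real.log (f t)) (Real.log c) (a / c)
      (b / c - a ^ 2 / (2 * c ^ 2)) := by
  have hc' : c ≠ 0 := ne_of_gt hc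
  have hg : E (fun t => (1/c) * f t - 1) 0 (a/c) (b/c) := by
    refine ((hf.const_mul (1/c)).sub (E_const 1)).congr (fun t => rfl) ?_ ?_ ?_ <;>
      field_simp <;> ring
  have h1 : E (fun t => Real.log (1 + ((1/c) * f t - 1))) 0 (a/c)
      (b/c + (-1/2) * (a/c) ^ 2) :=
    E.comp (by norm_num : (0:ℝ) < 1/2) log_quadratic hg
  have h2 := (E_const (Real.log c)).add h1
  have hev : (fun t => Real.log c + Real.log (1 + ((1/c) * f t - 1)))
      =ᶠ[nhds (0:ℝ)] fun t => Real.log (f t) := by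
    have hpos : ∀ᶠ t : ℝ in nhds 0, 0 < f t :=
      hf.tendsto.eventually (eventually_gt_nhds hc)
    filter_upwards [hpos] with t ht
    have : (1 : ℝ) + ((1/c) * f t - 1) = f t / c := by field_simp; ring
    rw [this, Real.log_div (ne_of_gt ht) hc']
    ring
  refine (h2.congr' hev).congr (fun t => rfl) (by ring) (by ring) ?_
  field_simp
  ring

lemma E_log_lin (c : ℝ) : E (fun t => Real.log (1 + c * t)) 0 c (-(c ^ 2) / 2) := by
  have hg : E (fun t => c * t) 0 c 0 :=
    (E_id.const_mul c).congr (fun t => rfl) (by ring) (by ring) (by ring)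
  have := E.comp (by norm_num : (0:ℝ) < 1/2) log_quadratic hg
  exact this.congr (fun t => rfl) rfl rfl (by ring)

/-- Let `1 < p < 2` with conjugate exponent `q = p/(p−1)`, let
`θ ∈ [0,1]` and set `λ = 2θ − 1`.  For `t ∈ (−1/2, 1/2)` set `c_t = 1/2 + t`,
`δ_t = ((1 − 2t)/(1 + 2t))^(λ/p)`, `γ_t = (c_t(1−c_t))^(p/2)`, and
`𝔪_t = γ_t·(1 + δ_t^(−p))·(1 + δ_t^q)^(p−1)`.  Then `𝔪_t = 1 + α·t² + o(t²)` as
`t → 0`, where `α = 2(λ²q − p)`. -/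
theorem stmt_9 (p q θ l α : ℝ) (hp1 : 1 < p) (hp2 : p < 2) (hq : q = p / (p - 1))
    (hθ0 : 0 ≤ θ) (hθ1 : θ ≤ 1) (hl : l = 2 * θ - 1) (hα : α = 2 * (l ^ 2 * q - p)) :
    (fun t : ℝ => ((1 / 2 + t) * (1 - (1 / 2 + t))) ^ (p / 2)
          * (1 + (((1 - 2 * t) / (1 + 2 * t)) ^ (l / p)) ^ (-p))
          * (1 + (((1 - 2 * t) / (1 + 2 * t)) ^ (l / p)) ^ q) ^ (p - 1)
        - (1 + α * t ^ 2))
      =o[nhds 0] (fun t : ℝ => t ^ 2) := by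
  have hp0 : (0:ℝ) < p := lt_trans one_pos hp1
  have hp1' : p - 1 ≠ 0 := by intro h; apply absurd hp1; simp; nlinarith
  -- base log expansions
  have hL1 : E (fun t => Real.log (1 - 2 * t)) 0 (-2) (-2) :=
    (E_log_lin (-2)).congr
      (fun t => by rw [show (1:ℝ) + (-2) * t = 1 - 2 * t by ring]) rfl rfl (by norm_num)
  have hL2 : E (fun t => Real.log (1 + 2 * t)) 0 2 (-2) :=
    (E_log_lin 2).congr (fun t => rfl) rfl rfl (by norm_num)
  -- s t = (l/p) * (log(1-2t) - log(1+2t))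
  have hs : E (fun t => (l/p) * (Real.log (1 - 2*t) - Real.log (1 + 2*t)))
      0 (-(4*l)/p) 0 :=
    ((hL1.sub hL2).const_mul (l/p)).congr (fun t => rfl) (by ring) (by ring) (by ring)
  -- factor A
  have hA : E (fun t => (1/4 : ℝ) ^ (p/2)
      * Real.exp ((p/2) * (Real.log (1 - 2*t) + Real.log (1 + 2*t))))
      ((1/4 : ℝ) ^ (p/2)) 0 ((1/4 : ℝ) ^ (p/2) * (-2*p)) := by
    have hin : E (fun t => (p/2) * (Real.log (1 - 2*t) + Real.log (1 + 2*t)))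
        0 0 (-2*p) :=
      ((hL1.add hL2).const_mul (p/2)).congr (fun t => rfl) (by ring) (by ring) (by ring)
    exact (hin.exp.const_mul ((1/4 : ℝ) ^ (p/2))).congr (fun t => rfl)
      (by simp) (by simp) (by simp)
  -- factor B
  have hB : E (fun t => 1 + Real.exp (-p *
      ((l/p) * (Real.log (1 - 2*t) - Real.log (1 + 2*t)))))
      2 (4*l) (8*l^2) := by
    have hps : E (fun t => -p * ((l/p) * (Real.log (1 - 2*t) - Real.log (1 + 2*t))))
        0 (4*l) 0 :=
      (hs.const_mul (-p)).congr (fun t => rfl) (by ring)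
        (by field_simp) (by ring)
    exact ((E_const 1).add hps.exp).congr (fun t => rfl)
      (by norm_num) (by simp) (by simp; ring)
  -- factor C
  have hC : E (fun t => Real.exp ((p-1) * Real.log (1 + Real.exp (q *
      ((l/p) * (Real.log (1 - 2*t) - Real.log (1 + 2*t)))))))
      (Real.exp ((p-1) * Real.log 2))
      (Real.exp ((p-1) * Real.log 2) * (-2*l))
      (Real.exp ((p-1) * Real.log 2) * (2*l^2*q)) := by
    have hqs : E (fun t => q * ((l/p) * (Real.log (1 - 2*t) - Real.log (1 + 2*t))))
        0 (-(4*l*q)/p) 0 :=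
      (hs.const_mul q).congr (fun t => rfl) (by ring) (by ring) (by ring)
    have hin : E (fun t => 1 + Real.exp (q *
        ((l/p) * (Real.log (1 - 2*t) - Real.log (1 + 2*t)))))
        2 (-(4*l*q)/p) (8*l^2*q^2/p^2) :=
      ((E_const 1).add hqs.exp).congr (fun t => rfl) (by norm_num) (by simp)
        (by simp; field_simp; ring)
    have hlog := (hin.log two_pos).const_mul (p-1)
    refine hlog.exp.congr (fun t => rfl) rfl ?_ ?_
    · congr 1
      rw [hq]; field_simp; ring
    · congr 1
      rw [hq]; field_simp; ring
  -- combine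
  have hABC := (hA.mul hB).mul hC
  -- constants
  have hc2 : Real.exp ((p-1) * Real.log 2) = (2:ℝ) ^ (p-1) := by
    rw [Real.rpow_def_of_pos two_pos]; ring_nf
  have hc1 : (1/4 : ℝ) ^ (p/2) = (2:ℝ) ^ (-p) := by
    rw [show (1/4 : ℝ) = (2:ℝ) ^ (-2 : ℝ) by
        rw [Real.rpow_neg (le_of_lt two_pos), show ((2:ℝ):ℝ)^(2:ℝ) = 4 by
          rw [show (2:ℝ) = ((2:ℕ):ℝ) by norm_num, Real.rpow_natCast]; norm_num]
        norm_num,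
      ← Real.rpow_mul (le_of_lt two_pos)]
    congr 1; ring
  have hcc : (1/4 : ℝ) ^ (p/2) * 2 * Real.exp ((p-1) * Real.log 2) = 1 := by
    rw [hc1, hc2, mul_comm ((2:ℝ)^(-p)) 2, mul_assoc, ← Real.rpow_add two_pos]
    rw [show -p + (p - 1) = -1 by ring, Real.rpow_neg_one]
    norm_num
  have h12 : (1/4 : ℝ) ^ (p/2) * Real.exp ((p-1) * Real.log 2) = 1/2 := by
    linear_combination hcc / 2
  have hfinal : E (fun t => (1/4 : ℝ) ^ (p/2)
        * Real.exp ((p/2) * (Real.log (1 - 2*t) + Real.log (1 + 2*t)))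
        * (1 + Real.exp (-p * ((l/p) * (Real.log (1 - 2*t) - Real.log (1 + 2*t)))))
        * Real.exp ((p-1) * Real.log (1 + Real.exp (q *
            ((l/p) * (Real.log (1 - 2*t) - Real.log (1 + 2*t)))))))
      1 0 α := by
    refine hABC.congr (fun t => rfl) hcc ?_ ?_
    · linear_combination (4*l : ℝ) * h12 - (4*l : ℝ) * h12
    · linear_combination (4*l^2*q - 4*p) * h12 - hα
  -- eventual identification with the original function
  refine IsLittleO.congr' hfinal ?_ EventuallyEq.rfl
  filter_upwards [Metric.ball_mem_nhds (0:ℝ) (by norm_num : (0:ℝ) < 1/4)] with t ht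
  have ht' : |t| < 1/4 := by simpa [Real.dist_eq] using ht
  have htlt := abs_lt.mp ht'
  have hx : (0:ℝ) < 1 - 2*t := by linarith [htlt.2]
  have hy : (0:ℝ) < 1 + 2*t := by linarith [htlt.1]
  have hu : (0:ℝ) < (1 - 2*t)/(1 + 2*t) := div_pos hx hy
  have hfac1 : ((1/2 + t) * (1 - (1/2 + t))) ^ (p/2)
      = (1/4 : ℝ)^(p/2)
        * Real.exp ((p/2) * (Real.log (1-2*t) + Real.log (1+2*t))) := by
    rw [show (1/2 + t) * (1 - (1/2 + t)) = (1/4) * ((1-2*t)*(1+2*t)) by ring,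
      Real.mul_rpow (by norm_num) (le_of_lt (mul_pos hx hy)),
      Real.rpow_def_of_pos (mul_pos hx hy), Real.log_mul hx.ne' hy.ne']
    rw [mul_comm (Real.log (1-2*t) + Real.log (1+2*t)) (p/2)]
  have hfac2 : (((1 - 2*t) / (1 + 2*t)) ^ (l/p)) ^ (-p)
      = Real.exp (-p * ((l/p) * (Real.log (1-2*t) - Real.log (1+2*t)))) := by
    rw [← Real.rpow_mul hu.le, Real.rpow_def_of_pos hu, Real.log_div hx.ne' hy.ne']
    congr 1; ring
  have hfac3 : (((1 - 2*t) / (1 + 2*t)) ^ (l/p)) ^ q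
      = Real.exp (q * ((l/p) * (Real.log (1-2*t) - Real.log (1+2*t)))) := by
    rw [← Real.rpow_mul hu.le, Real.rpow_def_of_pos hu, Real.log_div hx.ne' hy.ne']
    congr 1; ring
  have hfac4 : (1 + Real.exp (q * ((l/p) * (Real.log (1-2*t) - Real.log (1+2*t)))))
        ^ (p-1)
      = Real.exp ((p-1) * Real.log (1 + Real.exp (q *
          ((l/p) * (Real.log (1-2*t) - Real.log (1+2*t)))))) := by
    rw [Real.rpow_def_of_pos (by positivity)]
    congr 1; ring
  show _ = _
  rw [hfac1, hfac2, hfac3, hfac4]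
  ring
end
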